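/- Fix a dimension d ≥ 1 and an index i ∈ {1,…,d}. Let ρ > 0, p > 0, v ∈ ℝ^d with ‖v‖ < 1, and let h and S be arbitrary real numbers. Set θ = p/ρ, γ = 1/√(1−‖v‖²), D = ργ, m = ρhγ²v ∈ ℝ^d, and define the entropy variables W = θ⁻¹(h − θS, γv₁, …, γv_d, −γ) ∈ ℝ^{d+2}, the i-th flux F_i = (Dv_i, v_i m + p e_i, m_i) ∈ ℝ^{d+2} (where e_i is the i-th standard basis vector of ℝ^d and the middle block has d components), and the i-th entropy flux q_i = −DSv_i. Then the entropy potential ψ_i := W · F_i − q_i equals ργ v_i. -/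

import Mathlib

/-- The entropy potential flux `ψᵢ := W · Fᵢ − qᵢ` equals `ρ γ vᵢ` for the RHD system.
Here `W = θ⁻¹(h − θS, γv, −γ) ∈ ℝ^{d+2}` are the entropy variables,
`Fᵢ = (D vᵢ, vᵢ m + p eᵢ, mᵢ)` is the `i`-th flux, and `qᵢ = −D S vᵢ` is the `i`-th
entropy flux, with `D = ργ`, `m = ρhγ²v`, `θ = p/ρ`, `γ = 1/√(1−‖v‖²)`. -/
theorem stmt0 (d : ℕ) (hd : 1 ≤ d) (i : Fin d) (ρ p h S : ℝ)
    (hρ : 0 < ρ) (hp : 0 < p) (v : Fin d → ℝ) (hv : ∑ j, v j ^ 2 < 1) :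
    let θ : ℝ := p / ρ
    let γ : ℝ := 1 / Real.sqrt (1 - ∑ j, v j ^ 2)
    let D : ℝ := ρ * γ
    let m : Fin d → ℝ := fun j => ρ * h * γ ^ 2 * v j
    let W : Fin (d + 2) → ℝ :=
      Fin.cons (θ⁻¹ * (h - θ * S)) (Fin.snoc (fun j => θ⁻¹ * (γ * v j)) (θ⁻¹ * (-γ)))
    let F : Fin (d + 2) → ℝ :=
      Fin.cons (D * v i)
        (Fin.snoc (fun j => v i * m j + p * (if j = i then 1 else 0)) (m i))
    let q : ℝ := -(D * S * v i)
    (∑ k, W k * F k) - q = ρ * γ * v i := by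
  intro θ γ D m W F q
  set s : ℝ := ∑ j, v j ^ 2 with hs
  have hs0 : 0 < 1 - s := by linarith
  have hγ2 : γ ^ 2 * (1 - s) = 1 := by
    show (1 / Real.sqrt (1 - s)) ^ 2 * (1 - s) = 1
    rw [div_pow, one_pow, Real.sq_sqrt hs0.le]
    field_simp
  have hγpos : 0 < γ := by
    have := Real.sqrt_pos.mpr hs0
    show 0 < 1 / Real.sqrt (1 - s)
    positivity
  clear_value γ
  have hmid : (∑ j : Fin d, θ⁻¹ * (γ * v j) * (v i * m j + p * (if j = i then 1 else 0)))
      = θ⁻¹ * γ * v i * (ρ * h * γ ^ 2) * s + θ⁻¹ * γ * v i * p := by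
    have h1 : (∑ j : Fin d, θ⁻¹ * (γ * v j) * (v i * m j))
        = θ⁻¹ * γ * v i * (ρ * h * γ ^ 2) * s := by
      rw [hs, Finset.mul_sum]
      apply Finset.sum_congr rfl
      intro j _
      simp only [m]
      ring
    have h2 : (∑ j : Fin d, θ⁻¹ * (γ * v j) * (p * (if j = i then 1 else 0)))
        = θ⁻¹ * γ * v i * p := by
      rw [Finset.sum_congr rfl (fun j _ => by
        rw [show θ⁻¹ * (γ * v j) * (p * (if j = i then 1 else 0))
            = (if j = i then θ⁻¹ * (γ * v j) * p else 0) by split <;> ring])]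
      rw [Finset.sum_ite_eq' Finset.univ i (fun j => θ⁻¹ * (γ * v j) * p)]
      simp only [Finset.mem_univ, if_true]
      ring
    calc (∑ j : Fin d, θ⁻¹ * (γ * v j) * (v i * m j + p * (if j = i then 1 else 0)))
        = (∑ j : Fin d, (θ⁻¹ * (γ * v j) * (v i * m j)
            + θ⁻¹ * (γ * v j) * (p * (if j = i then 1 else 0)))) := by
          apply Finset.sum_congr rfl; intro j _; ring
      _ = _ := by rw [Finset.sum_add_distrib, h1, h2]
  rw [Fin.sum_univ_succ, Fin.sum_univ_castSucc]
  simp only [W, F, Fin.cons_zero, Fin.cons_succ, Fin.snoc_castSucc, Fin.snoc_last]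
  rw [hmid]
  simp only [q, D, m, θ]
  have hρ' : ρ ≠ 0 := ne_of_gt hρ
  have hp' : p ≠ 0 := ne_of_gt hp
  have hγ' : γ ≠ 0 := ne_of_gt hγpos
  field_simp
  linear_combination (-(v i * ρ * h)) * hγ2
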